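/- Let λ : 𝔻 → [0,∞] be a measurable density on the unit disk with finite Carleson norm ‖λ‖_c and satisfying the vanishing Carleson condition: (1/r)·∫_{B(ζ,r) ∩ 𝔻} λ dA → 0 as r → 0, uniformly in ζ ∈ 𝕊. For 0 < s < 1 let A_s = {z : 1 − s < |z| < 1} be the boundary annulus and let λ·1_{A_s} denote the restriction of λ to A_s. Then ‖λ·1_{A_s}‖_c → 0 as s → 0. -/

import Mathlib

open MeasureTheory

/-- The Carleson norm of a density `λ : 𝔻 → [0,∞]` on the unit disk:
`‖λ‖_c = sup {(1/r) ∫_{B(ζ,r) ∩ 𝔻} λ dA : |ζ| = 1, 0 < r < 2}`. -/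
noncomputable def carlesonNormDisk (lam : ℂ → ENNReal) : ENNReal :=
  ⨆ (ζ : ℂ) (_ : ‖ζ‖ = 1) (r : ℝ) (_ : 0 < r) (_ : r < 2),
    ENNReal.ofReal (1 / r) * ∫⁻ z in Metric.ball ζ r ∩ {w : ℂ | ‖w‖ < 1}, lam z

lemma annulus_cover_aux {s : ℝ} (hs0 : 0 < s) (hs1 : s ≤ 1) {z : ℂ}
    (hz1 : 1 - s < ‖z‖) (hz2 : ‖z‖ < 1) :
    ∃ k ∈ Finset.range (Int.toNat ⌊2 * Real.pi / s⌋ + 1),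
      z ∈ Metric.ball (Complex.exp ((((k : ℝ) * s - Real.pi : ℝ) : ℂ) * Complex.I)) (3 * s) := by
  have hπ := Real.pi_pos
  set θ := Complex.arg z with hθ
  have h1 : -Real.pi < θ := Complex.neg_pi_lt_arg z
  have h2 : θ ≤ Real.pi := Complex.arg_le_pi z
  set d := θ + Real.pi with hd
  have hd0 : 0 < d := by simp only [hd]; linarith
  have hd2 : d ≤ 2 * Real.pi := by simp only [hd]; linarith
  set m := ⌊d / s⌋ with hm
  have hm0 : 0 ≤ m := Int.floor_nonneg.2 (by positivity)
  set k := m.toNat with hk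
  have hkm : (k : ℝ) = (m : ℝ) := by
    have := Int.toNat_of_nonneg hm0
    exact_mod_cast congrArg (fun n : ℤ => (n : ℝ)) this
  have hl : (k : ℝ) * s ≤ d := by
    have := Int.floor_le (d / s)
    rw [hkm]
    calc (m : ℝ) * s ≤ (d / s) * s := by nlinarith
    _ = d := by field_simp
  have hu : d < (k : ℝ) * s + s := by
    have := Int.lt_floor_add_one (d / s)
    have h' : d / s < (k : ℝ) + 1 := by rw [hkm]; exact_mod_cast this
    calc d = (d / s) * s := by field_simp
    _ < ((k : ℝ) + 1) * s := by nlinarith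
    _ = (k : ℝ) * s + s := by ring
  refine ⟨k, ?_, ?_⟩
  · rw [Finset.mem_range, Nat.lt_succ_iff]
    refine Int.toNat_le_toNat (Int.floor_le_floor ?_)
    exact div_le_div_of_nonneg_right hd2 hs0.le
  · -- distance estimate
    set a : ℝ := (k : ℝ) * s - Real.pi with ha
    set u : ℝ := θ - a with huu
    have hu0 : 0 ≤ u := by simp only [huu, ha]; simp only [hd] at hl; linarith
    have hus : u < s := by simp only [huu, ha]; simp only [hd] at hu; linarith
    have hz : (↑‖z‖ : ℂ) * Complex.exp (↑θ * Complex.I) = z :=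
      Complex.norm_mul_exp_arg_mul_I z
    have step1 : ‖z - Complex.exp (↑θ * Complex.I)‖ < s := by
      have heq : z - Complex.exp (↑θ * Complex.I)
          = ((‖z‖ - 1 : ℝ) : ℂ) * Complex.exp (↑θ * Complex.I) := by
        conv_lhs => rw [← hz]
        push_cast
        ring
      rw [heq, norm_mul, Complex.norm_real, Complex.norm_exp_ofReal_mul_I, mul_one, Real.norm_eq_abs,
        abs_of_nonpos (by linarith)]
      linarith
    have step2 : ‖Complex.exp (↑θ * Complex.I) - Complex.exp (↑a * Complex.I)‖
        < 2 * s := by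
      have hsplit : Complex.exp (↑θ * Complex.I)
          = Complex.exp (↑a * Complex.I) * Complex.exp (↑u * Complex.I) := by
        rw [← Complex.exp_add]
        congr 1
        push_cast [huu]
        ring
      have heq : Complex.exp (↑θ * Complex.I) - Complex.exp (↑a * Complex.I)
          = Complex.exp (↑a * Complex.I) * (Complex.exp (↑u * Complex.I) - 1) := by
        rw [hsplit]; ring
      rw [heq, norm_mul, Complex.norm_exp_ofReal_mul_I, one_mul]
      have habsu : ‖(↑u * Complex.I : ℂ)‖ = u := by
        rw [norm_mul, Complex.norm_I, Complex.norm_real, mul_one, Real.norm_eq_abs, abs_of_nonneg hu0]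
      have hle : ‖(↑u * Complex.I : ℂ)‖ ≤ 1 := by rw [habsu]; linarith
      have := Complex.norm_exp_sub_one_le hle
      rw [habsu] at this
      linarith
    rw [Metric.mem_ball, Complex.dist_eq]
    calc ‖z - Complex.exp (↑a * Complex.I)‖
        ≤ ‖z - Complex.exp (↑θ * Complex.I)‖
          + ‖Complex.exp (↑θ * Complex.I) - Complex.exp (↑a * Complex.I)‖ := by
          have := norm_sub_le_norm_sub_add_norm_sub z (Complex.exp (↑θ * Complex.I)) (Complex.exp (↑a * Complex.I))
          exact this
    _ < s + 2 * s := by linarith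
    _ = 3 * s := by ring

/-- Key approximation step in the proof of Theorem 5.1: if `λ` is a measurable density on the
unit disk with finite Carleson norm satisfying the vanishing Carleson condition
(`(1/r) ∫_{B(ζ,r) ∩ 𝔻} λ dA → 0` as `r → 0`, uniformly in `ζ ∈ 𝕊`), then the Carleson norm
of the restriction of `λ` to the boundary annulus `A_s = {1 - s < |z| < 1}` tends to `0`
as `s → 0⁺`. -/
theorem vanishing_carleson_truncation_tendsto_zero
    (lam : ℂ → ENNReal) (hmeas : Measurable lam)
    (hfin : carlesonNormDisk lam ≠ ⊤)
    (hvan : ∀ ε : ENNReal, 0 < ε → ∃ r₀ : ℝ, 0 < r₀ ∧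
      ∀ ζ : ℂ, ‖ζ‖ = 1 → ∀ r : ℝ, 0 < r → r < r₀ →
        ENNReal.ofReal (1 / r) *
          ∫⁻ z in Metric.ball ζ r ∩ {w : ℂ | ‖w‖ < 1}, lam z < ε) :
    Filter.Tendsto
      (fun s : ℝ => carlesonNormDisk
        (Set.indicator {z : ℂ | 1 - s < ‖z‖ ∧ ‖z‖ < 1} lam))
      (nhdsWithin 0 (Set.Ioi 0)) (nhds 0) := by
  rw [ENNReal.tendsto_nhds_zero]
  intro ε hε
  -- reduce to ε' := min ε 1
  set ε' : ENNReal := min ε 1 with hε'def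
  have hε'pos : 0 < ε' := lt_min hε zero_lt_one
  suffices h : ∀ᶠ s in nhdsWithin (0:ℝ) (Set.Ioi 0),
      carlesonNormDisk
        (Set.indicator {z : ℂ | 1 - s < ‖z‖ ∧ ‖z‖ < 1} lam) ≤ ε' by
    filter_upwards [h] with s hs
    exact hs.trans (min_le_left _ _)
  obtain ⟨r₀, hr₀, H₀⟩ := hvan ε' hε'pos
  set t : ℝ := min r₀ 1 with htdef
  have ht0 : 0 < t := lt_min hr₀ one_pos
  have ht1 : t ≤ 1 := min_le_right _ _
  have htr₀ : t ≤ r₀ := min_le_left _ _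
  set ε₂ : ENNReal := ENNReal.ofReal (t / 30) * ε' with hε₂def
  have hε₂pos : 0 < ε₂ := ENNReal.mul_pos
    (ne_of_gt (ENNReal.ofReal_pos.2 (by positivity))) (ne_of_gt hε'pos)
  obtain ⟨r₁, hr₁, H₁⟩ := hvan ε₂ hε₂pos
  have hδ : (0:ℝ) < min (r₁ / 3) 1 := lt_min (by linarith) one_pos
  filter_upwards [Ioo_mem_nhdsGT_of_mem (Set.mem_Ico.2 ⟨le_refl (0:ℝ), hδ⟩)]
  intro s hs
  obtain ⟨hs0, hsu⟩ := hs
  have hs1 : s ≤ 1 := le_of_lt (lt_of_lt_of_le hsu (min_le_right _ _))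
  have hsr₁ : 3 * s < r₁ := by
    have := lt_of_lt_of_le hsu (min_le_left _ _); linarith
  -- notation
  set A : Set ℂ := {z : ℂ | 1 - s < ‖z‖ ∧ ‖z‖ < 1} with hAdef
  have habs : Measurable (fun z : ℂ => ‖z‖) := continuous_norm.measurable
  have hA : MeasurableSet A := by
    have : A = {z : ℂ | 1 - s < ‖z‖} ∩ {z : ℂ | ‖z‖ < 1} := by
      ext z; simp [hAdef, Set.mem_setOf_eq]
    rw [this]
    exact (measurableSet_lt measurable_const habs).inter (measurableSet_lt habs measurable_const)
  have hD : MeasurableSet {w : ℂ | ‖w‖ < 1} :=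
    (isOpen_lt continuous_norm continuous_const).measurableSet
  set μ : Measure ℂ := volume.withDensity lam with hμdef
  have key : ∀ T : Set ℂ, MeasurableSet T →
      (∫⁻ z in T, A.indicator lam z) = μ (A ∩ T) := by
    intro T hT
    rw [lintegral_indicator hA, Measure.restrict_restrict hA, hμdef,
      withDensity_apply lam (hA.inter hT)]
  have keyμ : ∀ T : Set ℂ, MeasurableSet T → (∫⁻ z in T, lam z) = μ T := by
    intro T hT
    rw [hμdef, withDensity_apply lam hT]
  -- show the sup is ≤ ε'
  refine iSup_le fun ζ => iSup_le fun hζ => iSup_le fun r => iSup_le fun hr0 => iSup_le fun hr2 => ?_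
  set T : Set ℂ := Metric.ball ζ r ∩ {w : ℂ | ‖w‖ < 1} with hTdef
  have hT : MeasurableSet T := measurableSet_ball.inter hD
  rcases lt_or_ge r t with hrt | hrt
  · -- small radius: use H₀ directly
    have hmono : (∫⁻ z in T, A.indicator lam z) ≤ ∫⁻ z in T, lam z :=
      lintegral_mono fun a => Set.indicator_le_self _ _ a
    have := H₀ ζ hζ r hr0 (lt_of_lt_of_le hrt htr₀)
    calc ENNReal.ofReal (1 / r) * ∫⁻ z in T, A.indicator lam z
        ≤ ENNReal.ofReal (1 / r) * ∫⁻ z in T, lam z := mul_le_mul_right hmono _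
    _ ≤ ε' := le_of_lt this
  · -- large radius: cover argument
    set N : ℕ := Int.toNat ⌊2 * Real.pi / s⌋ + 1 with hNdef
    set c : ℕ → ℂ := fun k => Complex.exp ((((k : ℝ) * s - Real.pi : ℝ) : ℂ) * Complex.I)
      with hcdef
    have hcov : A ∩ T ⊆ ⋃ k ∈ Finset.range N,
        (Metric.ball (c k) (3 * s) ∩ {w : ℂ | ‖w‖ < 1}) := by
      rintro z ⟨hzA, -⟩
      obtain ⟨hz1, hz2⟩ := hzA
      obtain ⟨k, hk, hball⟩ := annulus_cover_aux hs0 hs1 hz1 hz2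
      exact Set.mem_biUnion hk ⟨hball, hz2⟩
    have hball_bound : ∀ k : ℕ,
        μ (Metric.ball (c k) (3 * s) ∩ {w : ℂ | ‖w‖ < 1})
          ≤ ENNReal.ofReal (3 * s) * ε₂ := by
      intro k
      have hck : ‖c k‖ = 1 := Complex.norm_exp_ofReal_mul_I _
      have h3s : (0:ℝ) < 3 * s := by linarith
      have := H₁ (c k) hck (3 * s) h3s hsr₁
      rw [keyμ _ (measurableSet_ball.inter hD)] at this
      set I := μ (Metric.ball (c k) (3 * s) ∩ {w : ℂ | ‖w‖ < 1}) with hI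
      have heq : I = ENNReal.ofReal (3 * s) * (ENNReal.ofReal (1 / (3 * s)) * I) := by
        rw [← mul_assoc, ← ENNReal.ofReal_mul (le_of_lt h3s)]
        rw [mul_one_div, div_self (ne_of_gt h3s), ENNReal.ofReal_one, one_mul]
      calc I = ENNReal.ofReal (3 * s) * (ENNReal.ofReal (1 / (3 * s)) * I) := heq
      _ ≤ ENNReal.ofReal (3 * s) * ε₂ := mul_le_mul_right (le_of_lt this) _
    have hsum : μ (A ∩ T) ≤ (N : ENNReal) * (ENNReal.ofReal (3 * s) * ε₂) := by
      calc μ (A ∩ T) ≤ μ (⋃ k ∈ Finset.range N,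
          (Metric.ball (c k) (3 * s) ∩ {w : ℂ | ‖w‖ < 1})) := measure_mono hcov
      _ ≤ ∑ k ∈ Finset.range N,
          μ (Metric.ball (c k) (3 * s) ∩ {w : ℂ | ‖w‖ < 1}) :=
          measure_biUnion_finset_le _ _
      _ ≤ ∑ _k ∈ Finset.range N, ENNReal.ofReal (3 * s) * ε₂ :=
          Finset.sum_le_sum fun k _ => hball_bound k
      _ = (N : ENNReal) * (ENNReal.ofReal (3 * s) * ε₂) := by
          rw [Finset.sum_const, Finset.card_range, nsmul_eq_mul]
    -- (N : ℝ) * (3 s) ≤ 27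
    have hNreal : (N : ℝ) * (3 * s) ≤ 27 := by
      have hfl : ((Int.toNat ⌊2 * Real.pi / s⌋ : ℤ) : ℝ) ≤ 2 * Real.pi / s := by
        rw [Int.toNat_of_nonneg (Int.floor_nonneg.2 (by positivity))]
        exact Int.floor_le _
      have hN : (N : ℝ) ≤ 2 * Real.pi / s + 1 := by
        rw [hNdef]
        push_cast
        push_cast at hfl
        linarith
      have hπ4 : Real.pi ≤ 4 := Real.pi_le_four
      have hπ0 : (0:ℝ) < Real.pi := Real.pi_pos
      have : (2 * Real.pi / s + 1) * (3 * s) = 6 * Real.pi + 3 * s := by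
        field_simp; ring
      nlinarith [mul_le_mul_of_nonneg_right hN (by linarith : (0:ℝ) ≤ 3 * s)]
    have hN27 : (N : ENNReal) * ENNReal.ofReal (3 * s) ≤ ENNReal.ofReal 27 := by
      rw [← ENNReal.ofReal_natCast N, ← ENNReal.ofReal_mul (by positivity)]
      exact ENNReal.ofReal_le_ofReal hNreal
    have hr_inv : ENNReal.ofReal (1 / r) ≤ ENNReal.ofReal (1 / t) :=
      ENNReal.ofReal_le_ofReal (by
        apply one_div_le_one_div_of_le ht0 hrt)
    calc ENNReal.ofReal (1 / r) * ∫⁻ z in T, A.indicator lam z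
        = ENNReal.ofReal (1 / r) * μ (A ∩ T) := by rw [key T hT]
    _ ≤ ENNReal.ofReal (1 / t) * ((N : ENNReal) * (ENNReal.ofReal (3 * s) * ε₂)) :=
        mul_le_mul hr_inv hsum zero_le zero_le
    _ = ENNReal.ofReal (1 / t) * (((N : ENNReal) * ENNReal.ofReal (3 * s)) * ε₂) := by
        ring_nf
    _ ≤ ENNReal.ofReal (1 / t) * (ENNReal.ofReal 27 * ε₂) :=
        mul_le_mul_right (mul_le_mul_left hN27 _) _
    _ = (ENNReal.ofReal (1 / t) * ENNReal.ofReal 27 * ENNReal.ofReal (t / 30)) * ε' := by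
        rw [hε₂def]; ring
    _ = ENNReal.ofReal ((1 / t) * 27 * (t / 30)) * ε' := by
        rw [← ENNReal.ofReal_mul (by positivity), ← ENNReal.ofReal_mul (by positivity)]
    _ ≤ 1 * ε' := by
        apply mul_le_mul_left
        apply ENNReal.ofReal_le_one.2
        have ht0' : t ≠ 0 := ne_of_gt ht0
        rw [show (1 / t) * 27 * (t / 30) = 27 / 30 by field_simp]
        norm_num
    _ = ε' := one_mul _
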